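/- Let G be a connected graph of order n containing two vertices x and y, each of degree at least 2, with d(x,y) ≥ 3. Then γ_{StR}(G) ≤ n − 2. -/

import Mathlib

namespace SimpleGraph

variable {V : Type*}

/-- The degree of a vertex (cardinality of its open neighborhood). -/
noncomputable def deg (G : SimpleGraph V) (v : V) : ℕ := (G.neighborSet v).ncard

/-- Maximum degree. -/
noncomputable def maxDeg [Fintype V] (G : SimpleGraph V) : ℕ :=
  Finset.univ.sup fun v => G.deg v

/-- A strong Roman dominating function: `f : V → {0,1,...,⌈Δ/2⌉+1}` such that every vertex
with value 0 has a neighbor `w` with `f w ≥ 2` and `f w ≥ 1 + ⌈|N(w) ∩ B₀|/2⌉`. -/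
def IsStRDF [Fintype V] (G : SimpleGraph V) (f : V → ℕ) : Prop :=
  (∀ v, f v ≤ (G.maxDeg + 1) / 2 + 1) ∧
  ∀ v, f v = 0 → ∃ w, G.Adj v w ∧ 2 ≤ f w ∧
    1 + ((G.neighborSet w ∩ {u | f u = 0}).ncard + 1) / 2 ≤ f w

/-- The strong Roman domination number. -/
noncomputable def gammaStR [Fintype V] (G : SimpleGraph V) : ℕ :=
  sInf {k | ∃ f, G.IsStRDF f ∧ ∑ v, f v = k}

/-- A Roman dominating function. -/
def IsRDF (G : SimpleGraph V) (f : V → ℕ) : Prop :=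
  (∀ v, f v ≤ 2) ∧ ∀ v, f v = 0 → ∃ w, G.Adj v w ∧ f w = 2

/-- The Roman domination number. -/
noncomputable def gammaR [Fintype V] (G : SimpleGraph V) : ℕ :=
  sInf {k | ∃ f, G.IsRDF f ∧ ∑ v, f v = k}

/-- A dominating set. -/
def IsDomSet (G : SimpleGraph V) (D : Set V) : Prop :=
  ∀ v ∉ D, ∃ w ∈ D, G.Adj v w

/-- The domination number. -/
noncomputable def gammaDom [Fintype V] (G : SimpleGraph V) : ℕ :=
  sInf {k | ∃ D : Set V, G.IsDomSet D ∧ D.ncard = k}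

end SimpleGraph

/-- If a connected graph `G` of order `n` has two vertices `x`, `y` of degree at least 2
with `d(x,y) ≥ 3`, then `γ_{StR}(G) ≤ n − 2`. -/
theorem stmt11 {V : Type*} [Fintype V] (G : SimpleGraph V) (hc : G.Connected)
    (x y : V) (hx : 2 ≤ G.deg x) (hy : 2 ≤ G.deg y) (hd : 3 ≤ G.dist x y) :
    G.gammaStR ≤ Fintype.card V - 2 := by
  classical
  -- distance helpers
  have hadj1 : ∀ u v : V, G.Adj u v → G.dist u v ≤ 1 := fun u v h =>
    le_trans (G.dist_le h.toWalk) (by simp)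
  have hno2 : ∀ u : V, ¬ (G.Adj x u ∧ G.Adj u y) := by
    intro u ⟨h1, h2⟩
    have : G.dist x y ≤ 2 :=
      le_trans (G.dist_le (SimpleGraph.Walk.cons h1 h2.toWalk)) (by simp)
    omega
  have hxy : x ≠ y := by rintro rfl; simp [SimpleGraph.dist_self] at hd
  have hnadjxy : ¬ G.Adj x y := fun h => by have := hadj1 x y h; omega
  -- extract neighbors
  obtain ⟨a, ha, b, hb, hab⟩ := (Set.one_lt_ncard (G.neighborSet x).toFinite).1 hx
  obtain ⟨c, hcc, d, hdd, hcd⟩ := (Set.one_lt_ncard (G.neighborSet y).toFinite).1 hy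
  rw [SimpleGraph.mem_neighborSet] at ha hb hcc hdd
  have hxa : x ≠ a := ha.ne
  have hxb : x ≠ b := hb.ne
  have hyc : y ≠ c := hcc.ne
  have hyd : y ≠ d := hdd.ne
  have hya : y ≠ a := fun h => hnadjxy (h ▸ ha)
  have hyb : y ≠ b := fun h => hnadjxy (h ▸ hb)
  have hxc : x ≠ c := fun h => hnadjxy (G.adj_symm (h ▸ hcc))
  have hxd : x ≠ d := fun h => hnadjxy (G.adj_symm (h ▸ hdd))
  have hac : a ≠ c := fun h => hno2 a ⟨ha, G.adj_symm (h ▸ hcc)⟩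
  have had : a ≠ d := fun h => hno2 a ⟨ha, G.adj_symm (h ▸ hdd)⟩
  have hbc : b ≠ c := fun h => hno2 b ⟨hb, G.adj_symm (h ▸ hcc)⟩
  have hbd : b ≠ d := fun h => hno2 b ⟨hb, G.adj_symm (h ▸ hdd)⟩
  -- the function
  set f : V → ℕ := fun v =>
    if v = x ∨ v = y then 2 else if v = a ∨ v = b ∨ v = c ∨ v = d then 0 else 1 with hf
  have hfx : f x = 2 := by simp [hf]
  have hfy : f y = 2 := by simp [hf]
  have hmax : 2 ≤ G.maxDeg := le_trans hx (Finset.le_sup (Finset.mem_univ x))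
  have hzero : ∀ u, f u = 0 ↔ (u = a ∨ u = b ∨ u = c ∨ u = d) := by
    intro u
    constructor
    · intro h
      simp only [hf] at h
      by_cases h1 : u = x ∨ u = y
      · simp [h1] at h
      · by_cases h2 : u = a ∨ u = b ∨ u = c ∨ u = d
        · exact h2
        · simp [h1, h2] at h
    · intro h
      have h1 : ¬(u = x ∨ u = y) := by
        rcases h with rfl | rfl | rfl | rfl <;>
          simp [hxa.symm, hxb.symm, hxc.symm, hxd.symm, hya.symm, hyb.symm, hyc.symm, hyd.symm] <;>
          tauto
      simp [hf, h1, h]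
  -- B₀ bounds
  have hBx : (G.neighborSet x ∩ {u | f u = 0}).ncard ≤ 2 := by
    have hsub : G.neighborSet x ∩ {u | f u = 0} ⊆ {a, b} := by
      rintro u ⟨hu1, hu2⟩
      rcases (hzero u).1 hu2 with rfl | rfl | rfl | rfl
      · exact Or.inl rfl
      · exact Or.inr rfl
      · exact absurd ⟨hu1, G.adj_symm hcc⟩ (hno2 u)
      · exact absurd ⟨hu1, G.adj_symm hdd⟩ (hno2 u)
    calc (G.neighborSet x ∩ {u | f u = 0}).ncard ≤ ({a, b} : Set V).ncard :=
          Set.ncard_le_ncard hsub (Set.toFinite _)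
      _ ≤ 2 := Set.ncard_insert_le a {b} |>.trans (by simp [Set.ncard_singleton])
  have hBy : (G.neighborSet y ∩ {u | f u = 0}).ncard ≤ 2 := by
    have hsub : G.neighborSet y ∩ {u | f u = 0} ⊆ {c, d} := by
      rintro u ⟨hu1, hu2⟩
      rcases (hzero u).1 hu2 with rfl | rfl | rfl | rfl
      · exact absurd ⟨ha, G.adj_symm hu1⟩ (hno2 u)
      · exact absurd ⟨hb, G.adj_symm hu1⟩ (hno2 u)
      · exact Or.inl rfl
      · exact Or.inr rfl
    calc (G.neighborSet y ∩ {u | f u = 0}).ncard ≤ ({c, d} : Set V).ncard :=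
          Set.ncard_le_ncard hsub (Set.toFinite _)
      _ ≤ 2 := Set.ncard_insert_le c {d} |>.trans (by simp [Set.ncard_singleton])
  -- StRDF
  have hStR : G.IsStRDF f := by
    constructor
    · intro v
      have : f v ≤ 2 := by
        simp only [hf]; split <;> [omega; (split <;> omega)]
      omega
    · intro v hv
      rcases (hzero v).1 hv with rfl | rfl | rfl | rfl
      · exact ⟨x, G.adj_symm ha, by rw [hfx], by rw [hfx]; omega⟩
      · exact ⟨x, G.adj_symm hb, by rw [hfx], by rw [hfx]; omega⟩
      · exact ⟨y, G.adj_symm hcc, by rw [hfy], by rw [hfy]; omega⟩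
      · exact ⟨y, G.adj_symm hdd, by rw [hfy], by rw [hfy]; omega⟩
  -- the sum
  have hsum : ∑ v, f v = Fintype.card V - 2 := by
    have hdistinct : ({x, y, a, b, c, d} : Finset V).card = 6 := by
      rw [Finset.card_insert_of_notMem (by simp [hxy, hxa, hxb, hxc, hxd]),
        Finset.card_insert_of_notMem (by simp [hya, hyb, hyc, hyd]),
        Finset.card_insert_of_notMem (by simp [hab, hac, had]),
        Finset.card_insert_of_notMem (by simp [hbc, hbd]),
        Finset.card_insert_of_notMem (by simp [hcd]),
        Finset.card_singleton]
    set s : Finset V := {x, y, a, b, c, d} with hs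
    have h1 : ∑ v ∈ s, f v = 4 := by
      rw [hs]
      rw [Finset.sum_insert (by simp [hxy, hxa, hxb, hxc, hxd]),
        Finset.sum_insert (by simp [hya, hyb, hyc, hyd]),
        Finset.sum_insert (by simp [hab, hac, had]),
        Finset.sum_insert (by simp [hbc, hbd]),
        Finset.sum_insert (by simp [hcd]),
        Finset.sum_singleton]
      have hfa : f a = 0 := (hzero a).2 (Or.inl rfl)
      have hfb : f b = 0 := (hzero b).2 (Or.inr (Or.inl rfl))
      have hfc : f c = 0 := (hzero c).2 (Or.inr (Or.inr (Or.inl rfl)))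
      have hfd : f d = 0 := (hzero d).2 (Or.inr (Or.inr (Or.inr rfl)))
      rw [hfx, hfy, hfa, hfb, hfc, hfd]
      norm_num
    have h2 : ∑ v ∈ sᶜ, f v = sᶜ.card := by
      rw [Finset.card_eq_sum_ones]
      apply Finset.sum_congr rfl
      intro v hv
      simp only [Finset.mem_compl, hs, Finset.mem_insert, Finset.mem_singleton, not_or] at hv
      obtain ⟨h1, h2, h3, h4, h5, h6⟩ := hv
      simp [hf, h1, h2, h3, h4, h5, h6]
    have hcard : sᶜ.card = Fintype.card V - 6 := by
      rw [Finset.card_compl, hdistinct]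
    have hle : 6 ≤ Fintype.card V := hdistinct ▸ Finset.card_le_univ s
    rw [← Finset.sum_add_sum_compl s, h1, h2, hcard]
    omega
  exact Nat.sInf_le ⟨f, hStR, hsum⟩
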